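/- Let n₁, n₂ ≥ 1, let H ∈ M_{n₁·n₂}(ℂ), and let U₁ : ℝ → M_{n₁}(ℂ), U₂ : ℝ → M_{n₂}(ℂ) be functions differentiable at 0 with U₁(0) = I_{n₁} and U₂(0) = I_{n₂}. If exp(t·H) = U₁(t) ⊗ U₂(t) for all t ∈ ℝ, then H = H₁ ⊗ I_{n₂} + I_{n₁} ⊗ H₂, where H₁ = U₁′(0) and H₂ = U₂′(0). (The implication (F) ⇒ (L): if the joint unitary evolution of two systems factorizes at all times, the total Hamiltonian is a Kronecker sum, i.e., the interaction Hamiltonian vanishes.) -/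

import Mathlib

open Matrix Kronecker BigOperators

/-- (F) ⇒ (L): if the joint evolution `exp(t H)` factorizes as `U₁(t) ⊗ U₂(t)` for all
times `t`, with `U₁, U₂` differentiable at `0` and equal to the identity at `0`, then the
Hamiltonian is the Kronecker sum `H = H₁ ⊗ I + I ⊗ H₂` where `Hᵢ = Uᵢ′(0)`,
i.e. the interaction Hamiltonian vanishes. -/
theorem factorized_evolution_implies_kronecker_sum (n₁ n₂ : ℕ) (hn₁ : 1 ≤ n₁) (hn₂ : 1 ≤ n₂)
    (H : Matrix (Fin n₁ × Fin n₂) (Fin n₁ × Fin n₂) ℂ)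
    (U₁ : ℝ → Matrix (Fin n₁) (Fin n₁) ℂ) (U₂ : ℝ → Matrix (Fin n₂) (Fin n₂) ℂ)
    (hU₁0 : U₁ 0 = 1) (hU₂0 : U₂ 0 = 1)
    (H₁ : Matrix (Fin n₁) (Fin n₁) ℂ) (H₂ : Matrix (Fin n₂) (Fin n₂) ℂ)
    (hU₁' : ∀ i j, HasDerivAt (fun t => U₁ t i j) (H₁ i j) 0)
    (hU₂' : ∀ i j, HasDerivAt (fun t => U₂ t i j) (H₂ i j) 0)
    (hfact : ∀ t : ℝ, NormedSpace.exp (t • H) = U₁ t ⊗ₖ U₂ t) :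
    H = H₁ ⊗ₖ (1 : Matrix (Fin n₂) (Fin n₂) ℂ)
      + (1 : Matrix (Fin n₁) (Fin n₁) ℂ) ⊗ₖ H₂ := by
  letI : NormedRing (Matrix (Fin n₁ × Fin n₂) (Fin n₁ × Fin n₂) ℂ) :=
    Matrix.linftyOpNormedRing
  letI : NormedAlgebra ℝ (Matrix (Fin n₁ × Fin n₂) (Fin n₁ × Fin n₂) ℂ) :=
    Matrix.linftyOpNormedAlgebra
  letI : NormedAlgebra ℂ (Matrix (Fin n₁ × Fin n₂) (Fin n₁ × Fin n₂) ℂ) :=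
    Matrix.linftyOpNormedAlgebra
  have hee : (NormedSpace.exp :
      Matrix (Fin n₁ × Fin n₂) (Fin n₁ × Fin n₂) ℂ → _) = NormedSpace.exp :=
    rfl
  have hexp : HasDerivAt (fun t : ℝ => NormedSpace.exp (t • H)) H 0 := by
    have := hasDerivAt_exp_smul_const (𝕂 := ℝ) H (0 : ℝ)
    rwa [zero_smul, NormedSpace.exp_zero, one_mul] at this
  ext ⟨i, k⟩ ⟨j, l⟩
  let L : Matrix (Fin n₁ × Fin n₂) (Fin n₁ × Fin n₂) ℂ →ₗ[ℝ] ℂ :=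
    { toFun := fun A => A (i, k) (j, l)
      map_add' := fun _ _ => rfl
      map_smul' := fun _ _ => rfl }
  have hE : HasDerivAt (fun t : ℝ => NormedSpace.exp (t • H) (i, k) (j, l))
      (H (i, k) (j, l)) 0 :=
    L.toContinuousLinearMap.hasFDerivAt.comp_hasDerivAt 0 hexp
  have hP : HasDerivAt (fun t : ℝ => U₁ t i j * U₂ t k l)
      (H₁ i j * U₂ 0 k l + U₁ 0 i j * H₂ k l) 0 := (hU₁' i j).mul (hU₂' k l)
  have hEq : (fun t : ℝ => NormedSpace.exp (t • H) (i, k) (j, l)) =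
      fun t : ℝ => U₁ t i j * U₂ t k l := by
    funext t
    rw [hee, hfact t, Matrix.kroneckerMap_apply]
  rw [hEq] at hE
  have := hE.unique hP
  rw [hU₁0, hU₂0] at this
  simp only [Matrix.add_apply, Matrix.kroneckerMap_apply]
  exact this
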